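/- Let v ∈ C^1(ℝ) with v(ξ) > 0 for all ξ, and suppose ∫_0^∞ v(ξ)^{-2} dξ = ∫_{-∞}^0 v(ξ)^{-2} dξ = ∞. Let q_0, q_1 ∈ ℝ with q_1 ≠ 0, and define (T g)(ξ) = v(ξ)^{-1} e^{i q_0 q_1^{-1} ξ} g(∫_0^ξ v(η)^{-2} dη). Then T extends to a unitary operator on L^2(ℝ), and for every g ∈ C_c^1(ℝ) and every ξ ∈ ℝ: v(ξ)·[q_0 (v·Tg)(ξ) + q_1 i (v·Tg)'(ξ)] = i q_1 (T g')(ξ); i.e. the operator A_0 = v(q_0 + q_1 D)v satisfies A_0 T g = i q_1 T g'. -/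

import Mathlib

open MeasureTheory Real Set Filter
open scoped ENNReal

lemma lintegral_cov (σ σ' : ℝ → ℝ) (hd : ∀ x, HasDerivAt σ (σ' x) x)
    (hinj : Function.Injective σ) (hsurj : Function.Surjective σ) (F : ℝ → ℝ≥0∞) :
    ∫⁻ y, F y = ∫⁻ x, ENNReal.ofReal |σ' x| * F (σ x) := by
  have h := lintegral_image_eq_lintegral_abs_det_fderiv_mul (volume : Measure ℝ)
      MeasurableSet.univ
      (fun x _ => (hd x).hasDerivWithinAt.hasFDerivWithinAt) hinj.injOn F
  simpa [Set.image_univ, hsurj.range_eq, Measure.restrict_univ,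
    ContinuousLinearMap.det_toSpanSingleton] using h

lemma qmp_of_inverse (σ τ : ℝ → ℝ) (τ' : ℝ → ℝ) (hσc : Continuous σ)
    (hτd : ∀ y, HasDerivAt τ (τ' y) y)
    (hinv : ∀ x, τ (σ x) = x) (hinv2 : ∀ y, σ (τ y) = y) :
    Measure.QuasiMeasurePreserving σ (volume : Measure ℝ) (volume : Measure ℝ) := by
  refine ⟨hσc.measurable, Measure.AbsolutelyContinuous.mk fun N hN h0 => ?_⟩
  rw [Measure.map_apply hσc.measurable hN]
  have himg : σ ⁻¹' N = τ '' N := by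
    ext x
    constructor
    · intro hx; exact ⟨σ x, hx, hinv x⟩
    · rintro ⟨y, hy, rfl⟩; simpa [hinv2 y] using hy
  have hinjτ : Function.Injective τ := Function.LeftInverse.injective hinv2
  have h := lintegral_image_eq_lintegral_abs_det_fderiv_mul (volume : Measure ℝ) hN
      (fun y _ => (hτd y).hasDerivWithinAt.hasFDerivWithinAt) hinjτ.injOn (fun _ => 1)
  rw [himg, ← setLIntegral_one, h, setLIntegral_measure_zero _ _ h0]


/-- `(T g)(ξ) = v(ξ)⁻¹ e^{i q₀ q₁⁻¹ ξ} g(∫_0^ξ v(η)⁻² dη)`. -/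
noncomputable def Tmap (v : ℝ → ℝ) (q₀ q₁ : ℝ) (g : ℝ → ℂ) (ξ : ℝ) : ℂ :=
  ((v ξ)⁻¹ : ℝ) * Complex.exp (Complex.I * (q₀ / q₁ : ℝ) * ξ)
    * g (∫ η in (0 : ℝ)..ξ, ((v η) ^ 2)⁻¹)

/-- If `v ∈ C¹`, `v > 0` and `∫_0^∞ v⁻² = ∫_{-∞}^0 v⁻² = ∞`, then `T` extends to a unitary
operator on `L²(ℝ)` and intertwines `A₀ = v (q₀ + q₁ D) v` with `i q₁ d/dξ`:
`A₀ T g = i q₁ T g'` for `g ∈ C_c¹(ℝ)`. -/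
theorem Tmap_unitary_and_intertwines
    (v : ℝ → ℝ) (hv : ContDiff ℝ 1 v) (hvpos : ∀ ξ, 0 < v ξ)
    (hdivp : ∫⁻ ξ in Ioi (0 : ℝ), ENNReal.ofReal (((v ξ) ^ 2)⁻¹) = ⊤)
    (hdivm : ∫⁻ ξ in Iio (0 : ℝ), ENNReal.ofReal (((v ξ) ^ 2)⁻¹) = ⊤)
    (q₀ q₁ : ℝ) (hq₁ : q₁ ≠ 0) :
    (∃ 𝒯 : Lp ℂ 2 (volume : Measure ℝ) ≃ₗᵢ[ℂ] Lp ℂ 2 (volume : Measure ℝ),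
      ∀ (g : ℝ → ℂ) (hg : MemLp g 2 (volume : Measure ℝ)),
        ∃ hTg : MemLp (Tmap v q₀ q₁ g) 2 (volume : Measure ℝ),
          𝒯 (hg.toLp g) = hTg.toLp (Tmap v q₀ q₁ g)) ∧
    (∀ g : ℝ → ℂ, ContDiff ℝ 1 g → HasCompactSupport g → ∀ ξ : ℝ,
      (v ξ : ℂ) *
          ((q₀ : ℂ) * ((v ξ : ℂ) * Tmap v q₀ q₁ g ξ)
            + (q₁ : ℂ) * Complex.I * deriv (fun η => (v η : ℂ) * Tmap v q₀ q₁ g η) ξ)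
        = Complex.I * (q₁ : ℂ) * Tmap v q₀ q₁ (deriv g) ξ) := by
  -- basic objects
  set w : ℝ → ℝ := fun η => ((v η) ^ 2)⁻¹ with hw
  have hv0 : ∀ x, v x ≠ 0 := fun x => (hvpos x).ne'
  have hwpos : ∀ x, 0 < w x := fun x => inv_pos.2 (pow_pos (hvpos x) 2)
  have hwc : Continuous w := ((hv.continuous.pow 2).inv₀ fun x => pow_ne_zero 2 (hv0 x))
  set φ : ℝ → ℝ := fun ξ => ∫ η in (0 : ℝ)..ξ, w η with hφdef
  have hφd : ∀ x, HasDerivAt φ (w x) x := fun x =>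
    intervalIntegral.integral_hasDerivAt_right (hwc.intervalIntegrable _ _)
      (hwc.stronglyMeasurableAtFilter _ _) hwc.continuousAt
  have hφc : Continuous φ := by
    have : Differentiable ℝ φ := fun x => (hφd x).differentiableAt
    exact this.continuous
  have hφmono : StrictMono φ := by
    apply strictMono_of_deriv_pos
    intro x; rw [(hφd x).deriv]; exact hwpos x
  -- φ tends to ±∞
  have hφ0 : φ 0 = 0 := intervalIntegral.integral_same
  have htop : Tendsto φ atTop atTop := by
    apply tendsto_atTop_atTop_of_monotone hφmono.monotone
    by_contra h
    push_neg at h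
    obtain ⟨C, hC⟩ := h
    have hint : IntegrableOn w (Ioi (0 : ℝ)) volume := by
      apply integrableOn_Ioi_of_intervalIntegral_norm_bounded C 0
        (fun i : ℝ => hwc.integrableOn_Ioc) tendsto_id
      filter_upwards with i
      simp only [id_eq]
      have heq : (∫ x in (0 : ℝ)..i, ‖w x‖) = φ i := by
        apply intervalIntegral.integral_congr
        intro x _
        exact norm_of_nonneg (hwpos x).le
      rw [heq]
      exact (hC i).le
    have hfin := hint.lintegral_lt_top
    rw [hdivp] at hfin
    exact (lt_irrefl _ hfin).elim
  have hbot : Tendsto φ atBot atBot := by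
    apply tendsto_atBot_atBot_of_monotone hφmono.monotone
    by_contra h
    push_neg at h
    obtain ⟨C, hC⟩ := h
    have hint : IntegrableOn w (Iic (0 : ℝ)) volume := by
      apply integrableOn_Iic_of_intervalIntegral_norm_bounded (-C) 0
        (fun i : ℝ => hwc.integrableOn_Ioc) tendsto_id
      filter_upwards with i
      simp only [id_eq]
      have heq : (∫ x in i..(0 : ℝ), ‖w x‖) = -φ i := by
        rw [show -φ i = -(∫ x in (0 : ℝ)..i, ‖w x‖) by
          congr 1
          apply intervalIntegral.integral_congr
          intro x _
          exact (norm_of_nonneg (hwpos x).le).symm]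
        exact intervalIntegral.integral_symm _ _
      rw [heq]
      exact neg_le_neg (hC i).le
    have hfin := (hint.mono_set Iio_subset_Iic_self).lintegral_lt_top
    rw [hdivm] at hfin
    exact (lt_irrefl _ hfin).elim
  have hsurj : Function.Surjective φ := hφc.surjective htop hbot
  have hinj : Function.Injective φ := hφmono.injective
  -- the inverse ψ
  set Φ : ℝ ≃o ℝ := StrictMono.orderIsoOfSurjective φ hφmono hsurj with hΦ
  set ψ : ℝ → ℝ := fun y => Φ.symm y with hψdef
  have hψφ : ∀ x, ψ (φ x) = x := fun x =>
    StrictMono.orderIsoOfSurjective_symm_apply_self φ hφmono hsurj x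
  have hφψ : ∀ y, φ (ψ y) = y := by
    intro y
    have := Φ.apply_symm_apply y
    rwa [show ⇑Φ = φ from StrictMono.coe_orderIsoOfSurjective φ hφmono hsurj] at this
  have hψc : Continuous ψ := (Φ.symm : ℝ ≃o ℝ).continuous
  have hψd : ∀ y, HasDerivAt ψ ((w (ψ y))⁻¹) y := fun y =>
    HasDerivAt.of_local_left_inverse hψc.continuousAt (hφd (ψ y)) (hwpos _).ne'
      (Eventually.of_forall hφψ)
  have hψinj : Function.Injective ψ := Function.LeftInverse.injective hφψ
  have hψsurj : Function.Surjective ψ := fun x => ⟨φ x, hψφ x⟩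
  -- quasi measure preserving
  have qmpφ : Measure.QuasiMeasurePreserving φ (volume : Measure ℝ) volume :=
    qmp_of_inverse φ ψ _ hφc hψd hψφ hφψ
  have qmpψ : Measure.QuasiMeasurePreserving ψ (volume : Measure ℝ) volume :=
    qmp_of_inverse ψ φ w hψc hφd hφψ hψφ
  -- the phase
  set e : ℝ → ℂ := fun x => Complex.exp (Complex.I * ((q₀ / q₁ : ℝ) : ℂ) * (x : ℂ)) with he
  have henorm : ∀ x, ‖e x‖ = 1 := by
    intro x
    simp [he, Complex.norm_exp]
  have he0 : ∀ x, e x ≠ 0 := fun x => Complex.exp_ne_zero _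
  have hec : Continuous e := by
    apply Complex.continuous_exp.comp
    exact (continuous_const.mul Complex.continuous_ofReal)
  have hT : ∀ g x, Tmap v q₀ q₁ g x = (((v x)⁻¹ : ℝ) : ℂ) * e x * g (φ x) := fun g x => rfl
  -- norm identities
  have hnn : ∀ r : ℝ, 0 ≤ r → ∀ z : ℂ, ((‖(r : ℂ) * z‖₊ : ℝ≥0∞) : ℝ≥0∞) ^ (2 : ℝ)
      = ENNReal.ofReal (r ^ 2) * (‖z‖₊ : ℝ≥0∞) ^ (2 : ℝ) := by
    intro r hr z
    rw [nnnorm_mul, ENNReal.coe_mul, ENNReal.mul_rpow_of_nonneg _ _ (by norm_num : (0:ℝ) ≤ 2)]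
    congr 1
    rw [show ((‖(r : ℂ)‖₊ : ℝ≥0∞)) = ENNReal.ofReal r by
      rw [← Real.enorm_eq_ofReal hr]
      congr 1
      ext
      simp]
    rw [ENNReal.ofReal_rpow_of_nonneg hr (by norm_num : (0:ℝ) ≤ 2)]
    congr 1
    rw [show (2 : ℝ) = ((2 : ℕ) : ℝ) by norm_num, Real.rpow_natCast]
  have hlintT : ∀ g : ℝ → ℂ,
      ∫⁻ x, (‖Tmap v q₀ q₁ g x‖₊ : ℝ≥0∞) ^ (2 : ℝ) = ∫⁻ y, (‖g y‖₊ : ℝ≥0∞) ^ (2 : ℝ) := by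
    intro g
    rw [lintegral_cov φ w hφd hinj hsurj (fun y => (‖g y‖₊ : ℝ≥0∞) ^ (2 : ℝ))]
    apply lintegral_congr
    intro x
    rw [abs_of_pos (hwpos x), hT]
    have he1 : (‖e x * g (φ x)‖₊ : ℝ≥0∞) = (‖g (φ x)‖₊ : ℝ≥0∞) := by
      rw [nnnorm_mul, show ‖e x‖₊ = 1 from NNReal.coe_injective (by
        rw [coe_nnnorm, henorm x, NNReal.coe_one]), one_mul]
    rw [mul_assoc, hnn _ (inv_nonneg.2 (hvpos x).le) _, he1]
    congr 2
    rw [hw]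
    rw [inv_pow]
  have heLpT : ∀ g : ℝ → ℂ,
      eLpNorm (Tmap v q₀ q₁ g) 2 volume = eLpNorm g 2 volume := by
    intro g
    rw [eLpNorm_eq_lintegral_rpow_enorm_toReal two_ne_zero ENNReal.ofNat_ne_top,
      eLpNorm_eq_lintegral_rpow_enorm_toReal two_ne_zero ENNReal.ofNat_ne_top]
    simp only [ENNReal.toReal_ofNat]
    rw [show (∫⁻ x, ‖Tmap v q₀ q₁ g x‖ₑ ^ (2:ℝ)) = ∫⁻ x, ‖g x‖ₑ ^ (2:ℝ) from hlintT g]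
  have hmemT : ∀ g : ℝ → ℂ, MemLp g 2 (volume : Measure ℝ) →
      MemLp (Tmap v q₀ q₁ g) 2 (volume : Measure ℝ) := by
    intro g hg
    refine ⟨?_, ?_⟩
    · have h1 : Continuous fun x => (((v x)⁻¹ : ℝ) : ℂ) * e x :=
        (Complex.continuous_ofReal.comp (hv.continuous.inv₀ hv0)).mul hec
      have h2 : AEStronglyMeasurable (fun x => g (φ x)) volume :=
        hg.1.comp_quasiMeasurePreserving qmpφ
      exact h1.aestronglyMeasurable.mul h2
    · rw [heLpT g]; exact hg.2
  have haeT : ∀ g g' : ℝ → ℂ, g =ᵐ[volume] g' →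
      Tmap v q₀ q₁ g =ᵐ[volume] Tmap v q₀ q₁ g' := by
    intro g g' hgg
    have := qmpφ.ae_eq_comp hgg
    filter_upwards [this] with x hx
    simp only [hT, Function.comp] at hx ⊢
    rw [hx]
  -- the inverse map
  set V : (ℝ → ℂ) → (ℝ → ℂ) := fun g y => ((v (ψ y) : ℝ) : ℂ) * (e (ψ y))⁻¹ * g (ψ y) with hV
  have hlintV : ∀ g : ℝ → ℂ,
      ∫⁻ x, (‖V g x‖₊ : ℝ≥0∞) ^ (2 : ℝ) = ∫⁻ y, (‖g y‖₊ : ℝ≥0∞) ^ (2 : ℝ) := by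
    intro g
    rw [lintegral_cov ψ (fun y => (w (ψ y))⁻¹) hψd hψinj hψsurj
      (fun y => (‖g y‖₊ : ℝ≥0∞) ^ (2 : ℝ))]
    symm
    apply lintegral_congr
    intro y
    rw [abs_of_pos (inv_pos.2 (hwpos (ψ y)))]
    rw [show V g y = ((v (ψ y) : ℝ) : ℂ) * (e (ψ y))⁻¹ * g (ψ y) from rfl]
    have he1 : (‖(e (ψ y))⁻¹ * g (ψ y)‖₊ : ℝ≥0∞) = (‖g (ψ y)‖₊ : ℝ≥0∞) := by
      rw [nnnorm_mul, show ‖(e (ψ y))⁻¹‖₊ = 1 from NNReal.coe_injective (by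
        rw [coe_nnnorm, norm_inv, henorm (ψ y)] ; norm_num), one_mul]
    rw [mul_assoc, hnn _ (hvpos (ψ y)).le _, he1]
    congr 2
    rw [hw]
    rw [inv_inv]
  have heLpV : ∀ g : ℝ → ℂ, eLpNorm (V g) 2 volume = eLpNorm g 2 volume := by
    intro g
    rw [eLpNorm_eq_lintegral_rpow_enorm_toReal two_ne_zero ENNReal.ofNat_ne_top,
      eLpNorm_eq_lintegral_rpow_enorm_toReal two_ne_zero ENNReal.ofNat_ne_top]
    simp only [ENNReal.toReal_ofNat]
    rw [show (∫⁻ x, ‖V g x‖ₑ ^ (2:ℝ)) = ∫⁻ x, ‖g x‖ₑ ^ (2:ℝ) from hlintV g]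
  have hmemV : ∀ g : ℝ → ℂ, MemLp g 2 (volume : Measure ℝ) →
      MemLp (V g) 2 (volume : Measure ℝ) := by
    intro g hg
    refine ⟨?_, ?_⟩
    · have h1 : Continuous fun y => ((v (ψ y) : ℝ) : ℂ) * (e (ψ y))⁻¹ :=
        (Complex.continuous_ofReal.comp (hv.continuous.comp hψc)).mul
          ((hec.comp hψc).inv₀ fun y => he0 _)
      have h2 : AEStronglyMeasurable (fun y => g (ψ y)) volume :=
        hg.1.comp_quasiMeasurePreserving qmpψ
      exact h1.aestronglyMeasurable.mul h2
    · rw [heLpV g]; exact hg.2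
  have haeV : ∀ g g' : ℝ → ℂ, g =ᵐ[volume] g' → V g =ᵐ[volume] V g' := by
    intro g g' hgg
    have := qmpψ.ae_eq_comp hgg
    filter_upwards [this] with x hx
    simp only [hV, Function.comp] at hx ⊢
    rw [hx]
  have hVT : ∀ g : ℝ → ℂ, V (Tmap v q₀ q₁ g) = g := by
    intro g; funext y
    have h1 : ((v (ψ y) : ℝ) : ℂ) ≠ 0 := Complex.ofReal_ne_zero.mpr (hv0 _)
    have h2 : e (ψ y) ≠ 0 := he0 _
    simp only [hV, hT, hφψ y]
    field_simp
    rw [← Complex.ofReal_mul, mul_one_div_cancel (hv0 _), Complex.ofReal_one, one_mul]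
  have hTV : ∀ g : ℝ → ℂ, Tmap v q₀ q₁ (V g) = g := by
    intro g; funext x
    have h1 : ((v x : ℝ) : ℂ) ≠ 0 := Complex.ofReal_ne_zero.mpr (hv0 _)
    have h2 : e x ≠ 0 := he0 _
    simp only [hV, hT, hψφ x]
    field_simp
    rw [← Complex.ofReal_mul, one_div_mul_cancel (hv0 _), Complex.ofReal_one, one_mul]
  constructor
  · -- the unitary
    have memT' : ∀ f : Lp ℂ 2 (volume : Measure ℝ),
        MemLp (Tmap v q₀ q₁ ⇑f) 2 (volume : Measure ℝ) := fun f => hmemT _ (Lp.memLp f)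
    have memV' : ∀ f : Lp ℂ 2 (volume : Measure ℝ),
        MemLp (V ⇑f) 2 (volume : Measure ℝ) := fun f => hmemV _ (Lp.memLp f)
    refine ⟨⟨{ toFun := fun f => (memT' f).toLp _
               invFun := fun f => (memV' f).toLp _
               map_add' := ?_
               map_smul' := ?_
               left_inv := ?_
               right_inv := ?_ }, ?_⟩, ?_⟩
    · intro f g
      rw [← MemLp.toLp_add]
      apply MemLp.toLp_congr
      refine (haeT _ _ (Lp.coeFn_add f g)).trans (Eventually.of_forall fun x => ?_)
      simp [hT, mul_add]
    · intro a f
      simp only [RingHom.id_apply]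
      rw [← MemLp.toLp_const_smul]
      apply MemLp.toLp_congr
      refine (haeT _ _ (Lp.coeFn_smul a f)).trans (Eventually.of_forall fun x => ?_)
      simp [hT]
      ring
    · intro f
      have h1 : V ⇑((memT' f).toLp _) =ᵐ[volume] V (Tmap v q₀ q₁ ⇑f) :=
        haeV _ _ ((memT' f).coeFn_toLp)
      rw [hVT] at h1
      exact (MemLp.toLp_congr (memV' ((memT' f).toLp _)) (Lp.memLp f) h1).trans
        (Lp.toLp_coeFn f (Lp.memLp f))
    · intro f
      have h1 : Tmap v q₀ q₁ ⇑((memV' f).toLp _) =ᵐ[volume] Tmap v q₀ q₁ (V ⇑f) :=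
        haeT _ _ ((memV' f).coeFn_toLp)
      rw [hTV] at h1
      exact (MemLp.toLp_congr (memT' ((memV' f).toLp _)) (Lp.memLp f) h1).trans
        (Lp.toLp_coeFn f (Lp.memLp f))
    · intro f
      show ‖MemLp.toLp (Tmap v q₀ q₁ ⇑f) (memT' f)‖ = ‖f‖
      rw [Lp.norm_toLp (Tmap v q₀ q₁ ⇑f) (memT' f), heLpT, Lp.norm_def]
    · intro g hg
      refine ⟨hmemT g hg, ?_⟩
      show MemLp.toLp (Tmap v q₀ q₁ ⇑(hg.toLp g)) (memT' _)
          = (hmemT g hg).toLp (Tmap v q₀ q₁ g)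
      exact MemLp.toLp_congr (memT' _) (hmemT g hg) (haeT _ _ hg.coeFn_toLp)
  · -- the intertwining identity
    intro g hg1 _hg2 ξ
    have hgd : HasDerivAt g (deriv g (φ ξ)) (φ ξ) :=
      ((hg1.differentiable one_ne_zero) (φ ξ)).hasDerivAt
    have hcomp : HasDerivAt (fun η => g (φ η)) (w ξ • deriv g (φ ξ)) ξ :=
      HasDerivAt.scomp ξ hgd (hφd ξ)
    have hed : HasDerivAt e (e ξ * (Complex.I * ((q₀ / q₁ : ℝ) : ℂ))) ξ := by
      have h1 : HasDerivAt (fun x : ℝ => Complex.I * ((q₀ / q₁ : ℝ) : ℂ) * (x : ℂ))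
          (Complex.I * ((q₀ / q₁ : ℝ) : ℂ)) ξ := by
        simpa using (Complex.ofRealCLM.hasDerivAt (x := ξ)).const_mul
          (Complex.I * ((q₀ / q₁ : ℝ) : ℂ))
      exact h1.cexp
    have hFd : HasDerivAt (fun η => e η * g (φ η))
        (e ξ * (Complex.I * ((q₀ / q₁ : ℝ) : ℂ)) * g (φ ξ)
          + e ξ * (w ξ • deriv g (φ ξ))) ξ := hed.mul hcomp
    have hFeq : (fun η => (v η : ℂ) * Tmap v q₀ q₁ g η) = fun η => e η * g (φ η) := by
      funext η
      rw [hT]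
      have h1 : ((v η : ℝ) : ℂ) ≠ 0 := Complex.ofReal_ne_zero.mpr (hv0 η)
      field_simp
      rw [← Complex.ofReal_mul, mul_one_div_cancel (hv0 η), Complex.ofReal_one, one_mul]
    rw [hFeq, hFd.deriv, hT g ξ, hT (deriv g) ξ]
    have h1 : ((v ξ : ℝ) : ℂ) ≠ 0 := Complex.ofReal_ne_zero.mpr (hv0 ξ)
    have hq : ((q₁ : ℝ) : ℂ) ≠ 0 := Complex.ofReal_ne_zero.mpr hq₁
    rw [Complex.real_smul]
    rw [show ((w ξ : ℝ) : ℂ) = (((v ξ) ^ 2 : ℝ) : ℂ)⁻¹ by rw [hw]; push_cast; ring]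
    push_cast
    field_simp
    ring_nf
    rw [Complex.I_sq]
    ring
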